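/- (Reflection comparison in every half-domain implies foliated Schwarz symmetry.) Let Ω be an open ball or annulus centered at the origin in ℝ^N, N ≥ 2, and let U = (u_1,…,u_m) ∈ C²(Ω;ℝ^m) ∩ C(Ω̄;ℝ^m) be a classical solution of −Δu_i = f_i(|x|,U) in Ω, u_i = 0 on ∂Ω, and assume the system is fully coupled along U in Ω(e) for every direction e ∈ S^{N−1}. If for every e ∈ S^{N−1} one has either U ≥ U^{σ_e} in Ω(e) or U ≤ U^{σ_e} in Ω(e) (componentwise), then U is foliated Schwarz symmetric. -/

import Mathlib

open MeasureTheory Real Set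
open scoped RealInnerProductSpace ENNReal

noncomputable section

/-- Euclidean space `ℝ^N`. -/
abbrev EuclN (N : ℕ) := EuclideanSpace ℝ (Fin N)

/-- The Laplacian of a scalar function on `ℝ^N`. -/
def lap {N : ℕ} (u : EuclN N → ℝ) (x : EuclN N) : ℝ :=
  ∑ i : Fin N, iteratedFDeriv ℝ 2 u x ![EuclideanSpace.single i 1, EuclideanSpace.single i 1]

/-- Partial derivative `∂f/∂u_j` of `f(r, u)` with respect to the `j`-th `u`-variable. -/
def pd {m : ℕ} (f : ℝ → (Fin m → ℝ) → ℝ) (j : Fin m) (r : ℝ) (s : Fin m → ℝ) : ℝ :=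
  fderiv ℝ (f r) s (Pi.single j 1)

/-- `Ψ ∈ C^1_c(Ω'; ℝ^m)`. -/
def IsTestFun {N m : ℕ} (Ω' : Set (EuclN N)) (Ψ : Fin m → EuclN N → ℝ) : Prop :=
  ∀ i, ContDiff ℝ 1 (Ψ i) ∧ HasCompactSupport (Ψ i) ∧ tsupport (Ψ i) ⊆ Ω'

/-- The quadratic form `Q_U(Ψ; Ω')` of the linearized operator at a solution `U`. -/
def Qform {N m : ℕ} (f : Fin m → ℝ → (Fin m → ℝ) → ℝ) (U : Fin m → EuclN N → ℝ)
    (Ω' : Set (EuclN N)) (Ψ : Fin m → EuclN N → ℝ) : ℝ :=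
  ∫ x in Ω', ((∑ i, ‖gradient (Ψ i) x‖ ^ 2) -
    ∑ i, ∑ j, pd (f i) j ‖x‖ (fun k => U k x) * Ψ i x * Ψ j x)

/-- There is a `k`-dimensional subspace of `C^1_c(Ω'; ℝ^m)` on which `Q_U(·; Ω')`
is negative definite. -/
def NegDefFamily {N m : ℕ} (f : Fin m → ℝ → (Fin m → ℝ) → ℝ) (U : Fin m → EuclN N → ℝ)
    (Ω' : Set (EuclN N)) (k : ℕ) : Prop :=
  ∃ Ψ : Fin k → Fin m → EuclN N → ℝ,
    (∀ l, IsTestFun Ω' (Ψ l)) ∧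
    ∀ c : Fin k → ℝ, c ≠ 0 → Qform f U Ω' (fun i x => ∑ l, c l * Ψ l i x) < 0

/-- The semilinear system is cooperative (weakly coupled) in `Ω'`. -/
def CoopAlong {N m : ℕ} (f : Fin m → ℝ → (Fin m → ℝ) → ℝ) (Ω' : Set (EuclN N)) : Prop :=
  ∀ i j, i ≠ j → ∀ x ∈ Ω', ∀ s : Fin m → ℝ, 0 ≤ pd (f i) j ‖x‖ s

/-- The semilinear system is fully coupled along the solution `U` in `Ω'`. -/
def FullyCoupledAlong {N m : ℕ} (f : Fin m → ℝ → (Fin m → ℝ) → ℝ)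
    (U : Fin m → EuclN N → ℝ) (Ω' : Set (EuclN N)) : Prop :=
  CoopAlong f Ω' ∧
  ∀ I J : Finset (Fin m), I.Nonempty → J.Nonempty → Disjoint I J → I ∪ J = Finset.univ →
    ∃ i₀ ∈ I, ∃ j₀ ∈ J,
      0 < volume {x ∈ Ω' | 0 < pd (f i₀) j₀ ‖x‖ (fun k => U k x)}

/-- `Ω` is an open ball or annulus centered at the origin. -/
def IsBallOrAnnulus {N : ℕ} (Ω : Set (EuclN N)) : Prop :=
  (∃ R : ℝ, 0 < R ∧ Ω = Metric.ball (0 : EuclN N) R) ∨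
  (∃ r R : ℝ, 0 < r ∧ r < R ∧ Ω = {x : EuclN N | r < ‖x‖ ∧ ‖x‖ < R})

/-- The half-domain `Ω(e) = {x ∈ Ω : x·e > 0}`. -/
def halfDom {N : ℕ} (Ω : Set (EuclN N)) (e : EuclN N) : Set (EuclN N) :=
  {x ∈ Ω | 0 < ⟪x, e⟫}

/-- Reflection through the hyperplane `T(e) = {x : x·e = 0}`. -/
def reflPt {N : ℕ} (e x : EuclN N) : EuclN N := x - (2 * ⟪x, e⟫) • e

/-- `U` is foliated Schwarz symmetric on `Ω` with respect to the axis `p`. -/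
def FoliatedSchwarzWith {N m : ℕ} (Ω : Set (EuclN N)) (U : Fin m → EuclN N → ℝ)
    (p : EuclN N) : Prop :=
  ‖p‖ = 1 ∧ ∀ i, ∀ x ∈ Ω, ∀ y ∈ Ω, ‖x‖ = ‖y‖ → ⟪y, p⟫ ≤ ⟪x, p⟫ → U i y ≤ U i x

/-- `U` is foliated Schwarz symmetric on `Ω`. -/
def FoliatedSchwarz {N m : ℕ} (Ω : Set (EuclN N)) (U : Fin m → EuclN N → ℝ) : Prop :=
  ∃ p : EuclN N, FoliatedSchwarzWith Ω U p

/-- `U` is radial on `Ω`. -/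
def IsRadial {N m : ℕ} (Ω : Set (EuclN N)) (U : Fin m → EuclN N → ℝ) : Prop :=
  ∀ i, ∀ x ∈ Ω, ∀ y ∈ Ω, ‖x‖ = ‖y‖ → U i x = U i y

/-- `U` is a classical solution of `-Δu_i = f_i(|x|, U)` in `Ω`, `u_i = 0` on `∂Ω`. -/
def IsSolution {N m : ℕ} (Ω : Set (EuclN N)) (f : Fin m → ℝ → (Fin m → ℝ) → ℝ)
    (U : Fin m → EuclN N → ℝ) : Prop :=
  (∀ i, ∀ x ∈ Ω, -lap (U i) x = f i ‖x‖ (fun k => U k x)) ∧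
  (∀ i, ∀ x ∈ frontier Ω, U i x = 0)

/-- The bilinear form of the linear system `-ΔU + C(x) U`. -/
def BformL {N m : ℕ} (Ω' : Set (EuclN N)) (C : Fin m → Fin m → EuclN N → ℝ)
    (V Φ : Fin m → EuclN N → ℝ) : ℝ :=
  ∫ x in Ω', ((∑ i, ⟪gradient (V i) x, gradient (Φ i) x⟫) +
    ∑ i, ∑ j, C i j x * V i x * Φ j x)

/-- `-ΔU + D U ≥ 0` weakly in `Ω'`. -/
def WeakSuperSol {N m : ℕ} (Ω' : Set (EuclN N)) (D : Fin m → Fin m → EuclN N → ℝ)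
    (U : Fin m → EuclN N → ℝ) : Prop :=
  ∀ Ψ : Fin m → EuclN N → ℝ, IsTestFun Ω' Ψ → (∀ i x, 0 ≤ Ψ i x) →
    0 ≤ BformL Ω' D U Ψ

/-- `-ΔU + D U ≤ 0` weakly in `Ω'`. -/
def WeakSubSol {N m : ℕ} (Ω' : Set (EuclN N)) (D : Fin m → Fin m → EuclN N → ℝ)
    (U : Fin m → EuclN N → ℝ) : Prop :=
  ∀ Ψ : Fin m → EuclN N → ℝ, IsTestFun Ω' Ψ → (∀ i x, 0 ≤ Ψ i x) →
    BformL Ω' D U Ψ ≤ 0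

/-- The linear system with matrix `D` is cooperative in `Ω`: `d_ij ≤ 0` a.e. for `i ≠ j`. -/
def LinCoop {N m : ℕ} (Ω : Set (EuclN N)) (D : Fin m → Fin m → EuclN N → ℝ) : Prop :=
  ∀ i j, i ≠ j → ∀ᵐ x ∂(volume : Measure (EuclN N)), x ∈ Ω → D i j x ≤ 0

/-- The linear system with matrix `D` is fully coupled in `Ω`. -/
def LinFullyCoupled {N m : ℕ} (Ω : Set (EuclN N)) (D : Fin m → Fin m → EuclN N → ℝ) : Prop :=
  LinCoop Ω D ∧
  ∀ I J : Finset (Fin m), I.Nonempty → J.Nonempty → Disjoint I J → I ∪ J = Finset.univ →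
    ∃ i₀ ∈ I, ∃ j₀ ∈ J, 0 < volume {x ∈ Ω | D i₀ j₀ x < 0}

/-- First symmetric eigenvalue on `Ω'`: the infimum of the Rayleigh quotient of the
symmetric matrix `C` over nontrivial test functions. -/
def lamOneSym {N m : ℕ} (Ω' : Set (EuclN N)) (C : Fin m → Fin m → EuclN N → ℝ) : ℝ :=
  sInf {r : ℝ | ∃ Ψ : Fin m → EuclN N → ℝ, IsTestFun Ω' Ψ ∧ (∃ i x, Ψ i x ≠ 0) ∧
    r = BformL Ω' C Ψ Ψ / ∫ x in Ω', ∑ i, (Ψ i x) ^ 2}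

end

noncomputable section AuxProof

def reflE {N : ℕ} (e : EuclN N) : EuclN N ≃ₗᵢ[ℝ] EuclN N :=
  Submodule.reflection ((ℝ ∙ e)ᗮ)

lemma reflE_apply {N : ℕ} (e x : EuclN N) (he : ‖e‖ = 1) :
    reflE e x = reflPt e x := by
  rw [reflE, Submodule.reflection_apply, reflPt]
  have h1 : (((ℝ ∙ e)ᗮ).starProjection x : EuclN N) =
      x - (ℝ ∙ e).starProjection x := by
    exact Submodule.starProjection_orthogonal_val x
  have h2 : ((ℝ ∙ e).starProjection x : EuclN N) = ⟪x, e⟫ • e := by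
    rw [Submodule.starProjection_singleton, real_inner_comm, he]
    norm_num
  rw [h1, h2]
  module

lemma reflE_inner {N : ℕ} (e x : EuclN N) (he : ‖e‖ = 1) :
    ⟪reflE e x, e⟫ = -⟪x, e⟫ := by
  rw [reflE_apply e x he, reflPt, inner_sub_left, real_inner_smul_left,
    real_inner_self_eq_norm_sq, he]
  ring

lemma reflE_invol {N : ℕ} (e x : EuclN N) : reflE e (reflE e x) = x :=
  Submodule.reflection_reflection _ x

theorem geom_main {N m : ℕ} (hN : 2 ≤ N)
    (Ω : Set (EuclN N)) (hΩ : IsBallOrAnnulus Ω)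
    (U : Fin m → EuclN N → ℝ)
    (hUc : ∀ i, ContinuousOn (U i) (closure Ω))
    (hrefl : ∀ e : EuclN N, ‖e‖ = 1 →
      (∀ i, ∀ x ∈ halfDom Ω e, U i (reflPt e x) ≤ U i x) ∨
      (∀ i, ∀ x ∈ halfDom Ω e, U i x ≤ U i (reflPt e x))) :
    FoliatedSchwarz Ω U := by
  classical
  -- basic facts about Ω
  have hopen : IsOpen Ω := by
    rcases hΩ with ⟨R, hR, rfl⟩ | ⟨r, R, hr, hrR, rfl⟩
    · exact Metric.isOpen_ball
    · have : {x : EuclN N | r < ‖x‖ ∧ ‖x‖ < R} = (fun x : EuclN N => ‖x‖) ⁻¹' (Ioo r R) := by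
        ext x; simp [Set.mem_Ioo]
      rw [this]
      exact isOpen_Ioo.preimage continuous_norm
  have hnorm : ∀ x y : EuclN N, ‖y‖ = ‖x‖ → x ∈ Ω → y ∈ Ω := by
    rcases hΩ with ⟨R, hR, rfl⟩ | ⟨r, R, hr, hrR, rfl⟩
    · intro x y h hx
      simp only [Metric.mem_ball, dist_zero_right] at *
      rwa [h]
    · intro x y h hx
      simp only [Set.mem_setOf_eq] at *
      rwa [h]
  have hbdd : ∃ R : ℝ, Ω ⊆ Metric.closedBall 0 R := by
    rcases hΩ with ⟨R, hR, rfl⟩ | ⟨r, R, hr, hrR, rfl⟩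
    · exact ⟨R, Metric.ball_subset_closedBall⟩
    · refine ⟨R, fun x hx => ?_⟩
      simp only [Set.mem_setOf_eq] at hx
      simp [Metric.mem_closedBall, dist_zero_right, le_of_lt hx.2]
  obtain ⟨R₀, hR₀⟩ := hbdd
  have hcomp : IsCompact (closure Ω) :=
    (isCompact_closedBall (0 : EuclN N) R₀).of_isClosed_subset isClosed_closure
      (closure_minimal hR₀ Metric.isClosed_closedBall)
  set W : EuclN N → ℝ := fun x => ∑ i, U i x with hW
  have hWc : ContinuousOn W (closure Ω) := continuousOn_finset_sum _ (fun i _ => hUc i)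
  set F : EuclN N → EuclN N := fun x => W x • x with hF
  have hFc : ContinuousOn F (closure Ω) := hWc.smul continuousOn_id
  have hFint : IntegrableOn F Ω volume :=
    (hFc.integrableOn_compact hcomp).mono_set subset_closure
  set v : EuclN N := ∫ x in Ω, F x with hv
  -- the key inequality lemma
  have key : ∀ e : EuclN N, ‖e‖ = 1 → 0 ≤ ⟪v, e⟫ →
      ∀ i, ∀ x ∈ halfDom Ω e, U i (reflPt e x) ≤ U i x := by
    intro e he hve
    set T : EuclN N ≃ₗᵢ[ℝ] EuclN N := reflE e with hT
    have hTx : ∀ x, T x = reflPt e x := fun x => reflE_apply e x he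
    have hTΩ : ∀ x, x ∈ Ω → T x ∈ Ω := fun x hx => hnorm x (T x) (T.norm_map x) hx
    have hTcl : MapsTo T (closure Ω) (closure Ω) := by
      intro x hx
      have h1 : T x ∈ (T : EuclN N → EuclN N) '' closure Ω := mem_image_of_mem _ hx
      have h2 : (T : EuclN N → EuclN N) '' closure Ω ⊆ closure ((T : EuclN N → EuclN N) '' Ω) :=
        image_closure_subset_closure_image T.continuous
      exact closure_mono (image_subset_iff.2 fun y hy => hTΩ y hy) (h2 h1)
    have hinnc : Continuous fun x : EuclN N => ⟪x, e⟫ :=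
      continuous_id.inner continuous_const
    set P : Set (EuclN N) := {x ∈ Ω | 0 < ⟪x, e⟫} with hPdef
    set M : Set (EuclN N) := {x ∈ Ω | ⟪x, e⟫ < 0} with hMdef
    have hPopen : IsOpen P := hopen.inter (isOpen_lt continuous_const hinnc)
    have hMopen : IsOpen M := hopen.inter (isOpen_lt hinnc continuous_const)
    have hPm : MeasurableSet P := hPopen.measurableSet
    have hMm : MeasurableSet M := hMopen.measurableSet
    have hPsub : P ⊆ Ω := fun x hx => hx.1
    have hMsub : M ⊆ Ω := fun x hx => hx.1
    -- integrable families
    have hIntOf : ∀ (g : EuclN N → ℝ), ContinuousOn g (closure Ω) →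
        ∀ (S : Set (EuclN N)), S ⊆ Ω → IntegrableOn g S volume := by
      intro g hg S hS
      exact (hg.integrableOn_compact hcomp).mono_set (hS.trans subset_closure)
    have hgc : ContinuousOn (fun x => W x * ⟪x, e⟫) (closure Ω) :=
      hWc.mul hinnc.continuousOn
    have hgTc : ContinuousOn (fun x => W (T x) * ⟪x, e⟫) (closure Ω) :=
      (hWc.comp T.continuous.continuousOn hTcl).mul hinnc.continuousOn
    -- ⟪v, e⟫ as an integral over Ω
    have h1 : ⟪v, e⟫ = ∫ x in Ω, W x * ⟪x, e⟫ := by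
      rw [hv, real_inner_comm, ← integral_inner hFint e]
      simp_rw [hF, real_inner_smul_right, real_inner_comm e]
    -- the hyperplane is null
    have hZ : volume {x : EuclN N | ⟪x, e⟫ = 0} = 0 := by
      have hsub : {x : EuclN N | ⟪x, e⟫ = 0} ⊆ ((ℝ ∙ e)ᗮ : Submodule ℝ (EuclN N)) := by
        intro x hx
        exact Submodule.mem_orthogonal_singleton_iff_inner_left.2 hx
      refine measure_mono_null hsub ?_
      apply Measure.addHaar_submodule
      intro htop
      have h3 : e ∈ ((ℝ ∙ e)ᗮ : Submodule ℝ (EuclN N)) := htop ▸ Submodule.mem_top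
      have h4 := Submodule.mem_orthogonal_singleton_iff_inner_left.1 h3
      rw [real_inner_self_eq_norm_sq, he] at h4
      norm_num at h4
    -- split the integral
    have hsplit : ∫ x in Ω, W x * ⟪x, e⟫ =
        (∫ x in P, W x * ⟪x, e⟫) + ∫ x in M, W x * ⟪x, e⟫ := by
      have haeq : Ω =ᵐ[volume] ((P ∪ M : Set (EuclN N)) : Set (EuclN N)) := by
        rw [Filter.eventuallyEq_set]
        have hsub2 : {x : EuclN N | ¬(x ∈ Ω ↔ x ∈ P ∪ M)} ⊆ {x : EuclN N | ⟪x, e⟫ = 0} := by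
          intro x hx
          simp only [mem_setOf_eq, mem_union, hPdef, hMdef, mem_sep_iff] at hx ⊢
          by_contra hne
          rcases lt_or_gt_of_ne hne with h | h
          · exact hx ⟨fun hxΩ => Or.inr ⟨hxΩ, h⟩, fun h' => h'.elim And.left And.left⟩
          · exact hx ⟨fun hxΩ => Or.inl ⟨hxΩ, h⟩, fun h' => h'.elim And.left And.left⟩
        exact measure_mono_null hsub2 hZ
      rw [setIntegral_congr_set haeq,
        setIntegral_union ?_ hMm (hIntOf _ hgc P hPsub) (hIntOf _ hgc M hMsub)]
      rw [Set.disjoint_left]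
      intro x hxP hxM
      exact absurd (hxP.2.trans hxM.2) (lt_irrefl 0)
    -- reflect the integral over M
    have hTemb : MeasurableEmbedding (T : EuclN N → EuclN N) :=
      T.toHomeomorph.measurableEmbedding
    have hTmp : MeasurePreserving (T : EuclN N → EuclN N)
        (volume : Measure (EuclN N)) volume := T.measurePreserving
    have hTinner : ∀ x, ⟪T x, e⟫ = -⟪x, e⟫ := fun x => reflE_inner e x he
    have hpre : (T : EuclN N → EuclN N) ⁻¹' M = P := by
      ext x
      simp only [mem_preimage, hMdef, hPdef, mem_setOf_eq]
      constructor
      · rintro ⟨h5, h6⟩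
        have hxΩ : x ∈ Ω := by
          have h7 := hTΩ _ h5
          rw [hT, reflE_invol] at h7
          exact h7
        refine ⟨hxΩ, ?_⟩
        rw [hTinner x] at h6
        linarith
      · rintro ⟨h5, h6⟩
        refine ⟨hTΩ _ h5, ?_⟩
        rw [hTinner x]
        linarith
    have hrefM : ∫ x in M, W x * ⟪x, e⟫ = ∫ x in P, W (T x) * ⟪T x, e⟫ := by
      have h5 := hTmp.setIntegral_preimage_emb hTemb (fun y => W y * ⟪y, e⟫) M
      rw [hpre] at h5
      exact h5.symm
    have h2 : ⟪v, e⟫ = ∫ x in P, (W x - W (T x)) * ⟪x, e⟫ := by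
      rw [h1, hsplit, hrefM]
      have hcong : ∫ x in P, W (T x) * ⟪T x, e⟫ = ∫ x in P, -(W (T x) * ⟪x, e⟫) := by
        apply setIntegral_congr_fun hPm
        intro x _
        simp only
        rw [hTinner x]
        ring
      rw [hcong, integral_neg, ← sub_eq_add_neg,
        ← integral_sub (hIntOf _ hgc P hPsub) (hIntOf _ hgTc P hPsub)]
      apply setIntegral_congr_fun hPm
      intro x _
      simp only
      ring
    -- case analysis on the reflection hypothesis
    rcases hrefl e he with hA | hB
    · exact hA
    · -- the "≤" case forces equality on the half-domain
      have hnonneg : ∀ x ∈ P, 0 ≤ (W (T x) - W x) * ⟪x, e⟫ := by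
        intro x hx
        have h6 : W x ≤ W (T x) := by
          rw [hW]
          simp only
          refine Finset.sum_le_sum fun i _ => ?_
          have h7 := hB i x hx
          rwa [← hTx x] at h7
        have h8 := hx.2
        nlinarith
      have hcPT : ContinuousOn (fun x => (W (T x) - W x) * ⟪x, e⟫) (closure Ω) :=
        ((hWc.comp T.continuous.continuousOn hTcl).sub hWc).mul hinnc.continuousOn
      have hint : IntegrableOn (fun x => (W (T x) - W x) * ⟪x, e⟫) P volume :=
        hIntOf _ hcPT P hPsub
      have hint0 : ∫ x in P, (W (T x) - W x) * ⟪x, e⟫ = 0 := by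
        have hle : ∫ x in P, (W (T x) - W x) * ⟪x, e⟫ = -⟪v, e⟫ := by
          rw [h2, ← integral_neg]
          apply setIntegral_congr_fun hPm
          intro x _
          simp only
          ring
        have hpos : 0 ≤ ∫ x in P, (W (T x) - W x) * ⟪x, e⟫ :=
          setIntegral_nonneg hPm hnonneg
        linarith
      have hae0 : (fun x => (W (T x) - W x) * ⟪x, e⟫) =ᵐ[volume.restrict P] 0 :=
        (setIntegral_eq_zero_iff_of_nonneg_ae
          ((ae_restrict_iff' hPm).2 (Filter.Eventually.of_forall hnonneg)) hint).1 hint0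
      have haeimp : ∀ᵐ x ∂(volume : Measure (EuclN N)),
          x ∈ P → (W (T x) - W x) * ⟪x, e⟫ = 0 := by
        rw [← ae_restrict_iff' hPm]
        exact hae0
      have hSempty : {x ∈ P | 0 < (W (T x) - W x) * ⟪x, e⟫} = ∅ := by
        by_contra hne
        have hSopen : IsOpen {x ∈ P | 0 < (W (T x) - W x) * ⟪x, e⟫} := by
          have hcP : ContinuousOn (fun x => (W (T x) - W x) * ⟪x, e⟫) P :=
            hcPT.mono (hPsub.trans subset_closure)
          exact hcP.isOpen_inter_preimage hPopen isOpen_Ioi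
        have hposS := hSopen.measure_pos volume (nonempty_iff_ne_empty.2 hne)
        have hnull : volume {x ∈ P | 0 < (W (T x) - W x) * ⟪x, e⟫} = 0 := by
          refine measure_mono_null ?_ (ae_iff.1 haeimp)
          intro x hx
          simp only [mem_setOf_eq, Classical.not_imp]
          exact ⟨hx.1, ne_of_gt hx.2⟩
        rw [hnull] at hposS
        exact lt_irrefl 0 hposS
      intro i x hx
      have hxP : x ∈ P := hx
      have hzero : (W (T x) - W x) * ⟪x, e⟫ = 0 := by
        by_contra h7
        have h8 : x ∈ ({x ∈ P | 0 < (W (T x) - W x) * ⟪x, e⟫} : Set (EuclN N)) :=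
          ⟨hxP, lt_of_le_of_ne (hnonneg x hxP) (Ne.symm h7)⟩
        rw [hSempty] at h8
        exact h8
      have hWeq : W (T x) = W x := by
        have h9 : ⟪x, e⟫ ≠ 0 := ne_of_gt hxP.2
        rcases mul_eq_zero.1 hzero with h10 | h10
        · linarith [sub_eq_zero.1 h10]
        · exact absurd h10 h9
      have hle2 : ∀ j ∈ (Finset.univ : Finset (Fin m)), U j x ≤ U j (T x) := by
        intro j _
        have h11 := hB j x hx
        rwa [← hTx x] at h11
      have hsum : ∑ j, U j x = ∑ j, U j (T x) := hWeq.symm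
      have hall := (Finset.sum_eq_sum_iff_of_le hle2).1 hsum
      have h12 := hall i (Finset.mem_univ i)
      rw [← hTx x, ← h12]
  -- choose the axis
  set p : EuclN N := if hv0 : v = 0 then EuclideanSpace.single (⟨0, by omega⟩ : Fin N) (1 : ℝ)
    else ‖v‖⁻¹ • v with hp
  have hpnorm : ‖p‖ = 1 := by
    rw [hp]
    split_ifs with hv0
    · rw [EuclideanSpace.norm_single]; norm_num
    · rw [norm_smul, norm_inv, norm_norm, inv_mul_cancel₀ (norm_ne_zero_iff.2 hv0)]
  refine ⟨p, hpnorm, ?_⟩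
  intro i x hxΩ y hyΩ hxy hyp
  by_cases hxyeq : x = y
  · exact le_of_eq (by rw [hxyeq])
  · have hd : (0 : ℝ) < ‖x - y‖ := by
      rw [norm_pos_iff, sub_ne_zero]
      exact hxyeq
    set d : ℝ := ‖x - y‖ with hdd
    set e : EuclN N := d⁻¹ • (x - y) with he'
    have hdne : d ≠ 0 := ne_of_gt hd
    have he1 : ‖e‖ = 1 := by
      rw [he', norm_smul, norm_inv, norm_norm, ← hdd, inv_mul_cancel₀ hdne]
    have hinxxy : ⟪x, x - y⟫ = d ^ 2 / 2 := by
      have h1 : ⟪x, x - y⟫ = ‖x‖ ^ 2 - ⟪x, y⟫ := by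
        rw [inner_sub_right, real_inner_self_eq_norm_sq]
      have h2 : d ^ 2 = ‖x‖ ^ 2 - 2 * ⟪x, y⟫ + ‖y‖ ^ 2 := by
        rw [hdd]
        exact norm_sub_sq_real x y
      rw [← hxy] at h2
      rw [h1]
      linarith
    have hxe : ⟪x, e⟫ = d / 2 := by
      rw [he', real_inner_smul_right, hinxxy]
      field_simp
    have hxepos : 0 < ⟪x, e⟫ := by
      rw [hxe]
      positivity
    have hreflxy : reflPt e x = y := by
      rw [reflPt, hxe, he', smul_smul]
      have h5 : 2 * (d / 2) * d⁻¹ = 1 := by field_simp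
      rw [h5, one_smul, sub_sub_cancel]
    have hve : 0 ≤ ⟪v, e⟫ := by
      rw [he', real_inner_smul_right, inner_sub_right]
      have hvxy : 0 ≤ ⟪v, x⟫ - ⟪v, y⟫ := by
        by_cases hv0 : v = 0
        · simp [hv0]
        · have hppp : p = ‖v‖⁻¹ • v := by rw [hp, dif_neg hv0]
          have h3 : ⟪y, p⟫ = ‖v‖⁻¹ * ⟪v, y⟫ := by
            rw [hppp, real_inner_smul_right, real_inner_comm]
          have h4 : ⟪x, p⟫ = ‖v‖⁻¹ * ⟪v, x⟫ := by
            rw [hppp, real_inner_smul_right, real_inner_comm]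
          rw [h3, h4] at hyp
          have hnv : 0 < ‖v‖ := norm_pos_iff.2 hv0
          have h6 := (mul_le_mul_iff_right₀ (inv_pos.2 hnv)).1 hyp
          linarith
      exact mul_nonneg (by positivity) hvxy
    have hkey := key e he1 hve i x ⟨hxΩ, hxepos⟩
    rw [hreflxy] at hkey
    exact hkey

end AuxProof

/-- **Reflection comparison in every half-domain implies foliated Schwarz symmetry.** -/
theorem statement16
    {N m : ℕ} (hN : 2 ≤ N) (hm : 2 ≤ m)
    (Ω : Set (EuclN N)) (hΩ : IsBallOrAnnulus Ω)
    (f : Fin m → ℝ → (Fin m → ℝ) → ℝ)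
    (hf : ∀ i, ContDiff ℝ 1 (fun q : ℝ × (Fin m → ℝ) => f i q.1 q.2))
    (U : Fin m → EuclN N → ℝ)
    (hUreg : ∀ i, ContDiffOn ℝ 2 (U i) Ω ∧ ContinuousOn (U i) (closure Ω))
    (hsol : IsSolution Ω f U)
    (hcoup : ∀ e : EuclN N, ‖e‖ = 1 → FullyCoupledAlong f U (halfDom Ω e))
    (hrefl : ∀ e : EuclN N, ‖e‖ = 1 →
      (∀ i, ∀ x ∈ halfDom Ω e, U i (reflPt e x) ≤ U i x) ∨
      (∀ i, ∀ x ∈ halfDom Ω e, U i x ≤ U i (reflPt e x))) :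
    FoliatedSchwarz Ω U := by
  exact geom_main hN Ω hΩ U (fun i => (hUreg i).2) hrefl
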